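/- Let n ≥ 2 be an integer, m > 0, and r ≥ 0 an even integer. Set g(x) = (-1)^{n+1} ψ₂⁽ⁿ⁾(x). Then for all x₁, x₂ ∈ (0,m) with x₁ + x₂ ≤ m, g^{(r)}(x₁) + g^{(r)}(x₂) − g^{(r)}(x₁+x₂) ≥ 2 g^{(r)}(m/2) − g^{(r)}(m). -/

import Mathlib

noncomputable def psi2 (n : ℕ) (x : ℝ) : ℝ :=
  (-1) ^ (n + 1) * (n.factorial : ℝ) * ∑' k : ℕ, (1 + (k : ℝ)) / (x + k) ^ (n + 1)

noncomputable def Gs (p : ℕ) (x : ℝ) : ℝ := ∑' k : ℕ, (1 + (k : ℝ)) / (x + k) ^ p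

lemma base_summable : Summable (fun k : ℕ => 1 / (1 + (k : ℝ)) ^ 2) := by
  have h := (summable_nat_add_iff (f := fun n : ℕ => 1 / (n : ℝ) ^ 2) 1).mpr
    (Real.summable_one_div_nat_pow.mpr one_lt_two)
  refine h.congr fun k => ?_
  push_cast
  ring_nf

lemma term_bound (p : ℕ) (hp : 3 ≤ p) {c y : ℝ} (hc0 : 0 < c) (hc1 : c ≤ 1) (hcy : c ≤ y)
    (k : ℕ) : (1 + (k : ℝ)) / (y + k) ^ p ≤ 1 / c ^ p * (1 / (1 + (k : ℝ)) ^ 2) := by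
  have hk : (0 : ℝ) ≤ k := k.cast_nonneg
  have h1k : (1 : ℝ) ≤ 1 + k := by linarith
  have h1 : c * (1 + k) ≤ y + k := by nlinarith
  have hden : c ^ p * (1 + (k : ℝ)) ^ 3 ≤ (y + k) ^ p := by
    calc c ^ p * (1 + (k : ℝ)) ^ 3 ≤ c ^ p * (1 + (k : ℝ)) ^ p := by
          gcongr
      _ = (c * (1 + k)) ^ p := (mul_pow _ _ _).symm
      _ ≤ (y + k) ^ p := by
          apply pow_le_pow_left₀ (by positivity) h1
  calc (1 + (k : ℝ)) / (y + k) ^ p ≤ (1 + (k : ℝ)) / (c ^ p * (1 + (k : ℝ)) ^ 3) := by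
        gcongr
      _ = 1 / c ^ p * (1 / (1 + (k : ℝ)) ^ 2) := by
        field_simp

lemma summable_term (p : ℕ) (hp : 3 ≤ p) {x : ℝ} (hx : 0 < x) :
    Summable fun k : ℕ => (1 + (k : ℝ)) / (x + k) ^ p := by
  have hc0 : 0 < min x 1 := lt_min hx one_pos
  refine Summable.of_nonneg_of_le (fun k => by positivity)
    (fun k => term_bound p hp hc0 (min_le_right _ _) (min_le_left _ _) k) ?_
  exact base_summable.mul_left _

lemma hasDerivAt_term (p : ℕ) (hp : 1 ≤ p) (k : ℕ) {x : ℝ} (hx : 0 < x) :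
    HasDerivAt (fun y : ℝ => (1 + (k : ℝ)) / (y + k) ^ p)
      (-(p : ℝ) * ((1 + (k : ℝ)) / (x + k) ^ (p + 1))) x := by
  have hx0 : x + (k : ℝ) ≠ 0 := by positivity
  have h : HasDerivAt (fun y : ℝ => (y + (k : ℝ)) ^ p) ((p : ℝ) * (x + k) ^ (p - 1) * 1) x :=
    ((hasDerivAt_id x).add_const (k : ℝ)).pow p
  have h2 := (h.inv (pow_ne_zero _ hx0)).const_mul (1 + (k : ℝ))
  have hpow : ((x + (k : ℝ)) ^ p) ^ 2 = (x + k) ^ (p + 1) * (x + k) ^ (p - 1) := by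
    rw [← pow_mul, ← pow_add]
    congr 1
    omega
  convert h2 using 1
  · rfl
  · rfl
  · rfl
  rw [hpow]
  have h1 : (x + (k : ℝ)) ^ (p - 1) ≠ 0 := pow_ne_zero _ hx0
  have h3 : (x + (k : ℝ)) ^ (p + 1) ≠ 0 := pow_ne_zero _ hx0
  field_simp

lemma hasDerivAt_Gs (p : ℕ) (hp : 3 ≤ p) {x : ℝ} (hx : 0 < x) :
    HasDerivAt (Gs p) (-(p : ℝ) * Gs (p + 1) x) x := by
  set c := min (x / 2) 1 with hcdef
  have hc0 : 0 < c := lt_min (by linarith) one_pos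
  have hc1 : c ≤ 1 := min_le_right _ _
  have hxm : x ∈ Set.Ioi (x / 2) := by
    simp only [Set.mem_Ioi]; linarith
  have hbound : ∀ (k : ℕ) (y : ℝ), y ∈ Set.Ioi (x / 2) →
      ‖-(p : ℝ) * ((1 + (k : ℝ)) / (y + k) ^ (p + 1))‖
        ≤ (p : ℝ) * (1 / c ^ (p + 1) * (1 / (1 + (k : ℝ)) ^ 2)) := by
    intro k y hy
    have hy' : x / 2 < y := hy
    have hy0 : 0 < y := by linarith
    have hterm : (0 : ℝ) ≤ (1 + (k : ℝ)) / (y + k) ^ (p + 1) := by positivity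
    have hb := term_bound (p + 1) (by omega) hc0 hc1
      (le_trans (min_le_left _ _) (le_of_lt hy')) k
    rw [Real.norm_eq_abs, abs_mul, abs_neg, abs_of_nonneg hterm,
      abs_of_nonneg (by positivity : (0:ℝ) ≤ (p : ℝ))]
    exact mul_le_mul_of_nonneg_left hb (by positivity)
  have key := hasDerivAt_tsum_of_isPreconnected
    (u := fun k : ℕ => (p : ℝ) * (1 / c ^ (p + 1) * (1 / (1 + (k : ℝ)) ^ 2)))
    (g := fun (k : ℕ) (y : ℝ) => (1 + (k : ℝ)) / (y + k) ^ p)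
    (g' := fun (k : ℕ) (y : ℝ) => -(p : ℝ) * ((1 + (k : ℝ)) / (y + k) ^ (p + 1)))
    ((base_summable.mul_left _).mul_left _)
    (isOpen_Ioi (a := x / 2)) (convex_Ioi _).isPreconnected
    (fun k y hy => hasDerivAt_term p (by omega) k (lt_trans (by linarith) hy))
    hbound hxm (summable_term p hp hx) hxm
  have htsum : (∑' k : ℕ, -(p : ℝ) * ((1 + (k : ℝ)) / (x + k) ^ (p + 1)))
      = -(p : ℝ) * Gs (p + 1) x := tsum_mul_left
  rw [htsum] at key
  exact key

lemma iter_Gs (p : ℕ) (hp : 3 ≤ p) (a : ℝ) (r : ℕ) : ∀ x ∈ Set.Ioi (0 : ℝ),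
    iteratedDeriv r (fun y => a * Gs p y) x
      = (a * ∏ i ∈ Finset.range r, -((p : ℝ) + i)) * Gs (p + r) x := by
  induction r with
  | zero => intro x _; simp [iteratedDeriv_zero]
  | succ r ih =>
    intro x hx
    rw [iteratedDeriv_succ]
    have hev : iteratedDeriv r (fun y => a * Gs p y)
        =ᶠ[nhds x] fun y => (a * ∏ i ∈ Finset.range r, -((p : ℝ) + i)) * Gs (p + r) y := by
      filter_upwards [isOpen_Ioi.mem_nhds hx] with y hy using ih y hy
    rw [hev.deriv_eq]
    have hD : HasDerivAt (fun y => (a * ∏ i ∈ Finset.range r, -((p : ℝ) + i)) * Gs (p + r) y)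
        ((a * ∏ i ∈ Finset.range r, -((p : ℝ) + i)) * (-((p + r : ℕ) : ℝ) * Gs (p + r + 1) x)) x :=
      (hasDerivAt_Gs (p + r) (by omega) hx).const_mul _
    rw [hD.deriv, Finset.prod_range_succ, show p + (r + 1) = p + r + 1 from rfl]
    push_cast
    ring

lemma convex_Gs (p : ℕ) (hp : 3 ≤ p) : ConvexOn ℝ (Set.Ioi 0) (Gs p) := by
  refine ⟨convex_Ioi 0, fun x hx y hy a b ha hb hab => ?_⟩
  simp only [smul_eq_mul, Set.mem_Ioi] at *
  have hxy : 0 < a * x + b * y := by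
    rcases eq_or_lt_of_le ha with h | h
    · have : b = 1 := by linarith
      rw [← h, this]; simpa using hy
    · nlinarith
  have S1 := summable_term p hp hx
  have S2 := summable_term p hp hy
  have S0 := summable_term p hp hxy
  have hterm : ∀ k : ℕ, (1 + (k : ℝ)) / (a * x + b * y + k) ^ p
      ≤ a * ((1 + (k : ℝ)) / (x + k) ^ p) + b * ((1 + (k : ℝ)) / (y + k) ^ p) := by
    intro k
    have hxk : (x + (k : ℝ)) ∈ Set.Ioi (0 : ℝ) := by simp; positivity
    have hyk : (y + (k : ℝ)) ∈ Set.Ioi (0 : ℝ) := by simp; positivity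
    have h := (convexOn_zpow (𝕜 := ℝ) (-(p : ℤ))).2 hxk hyk ha hb hab
    simp only [smul_eq_mul, zpow_neg, zpow_natCast] at h
    have harg : a * (x + (k : ℝ)) + b * (y + (k : ℝ)) = a * x + b * y + (k : ℝ) := by
      linear_combination (k : ℝ) * hab
    rw [harg] at h
    have h' := mul_le_mul_of_nonneg_left h (show (0:ℝ) ≤ 1 + (k : ℝ) by positivity)
    calc (1 + (k : ℝ)) / (a * x + b * y + k) ^ p
        = (1 + (k : ℝ)) * ((a * x + b * y + k) ^ p)⁻¹ := by rw [div_eq_mul_inv]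
      _ ≤ (1 + (k : ℝ)) * (a * ((x + k) ^ p)⁻¹ + b * ((y + k) ^ p)⁻¹) := h'
      _ = a * ((1 + (k : ℝ)) / (x + k) ^ p) + b * ((1 + (k : ℝ)) / (y + k) ^ p) := by
          field_simp
  calc Gs p (a * x + b * y)
      ≤ ∑' k : ℕ, (a * ((1 + (k : ℝ)) / (x + k) ^ p) + b * ((1 + (k : ℝ)) / (y + k) ^ p)) :=
        Summable.tsum_le_tsum hterm S0 ((S1.mul_left a).add (S2.mul_left b))
    _ = a * Gs p x + b * Gs p y := by
        rw [Summable.tsum_add (S1.mul_left a) (S2.mul_left b), tsum_mul_left, tsum_mul_left]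
        rfl

lemma convex_ineq {f : ℝ → ℝ} (hf : ConvexOn ℝ (Set.Ioi 0) f) {m x₁ x₂ : ℝ} (hm : 0 < m)
    (hx₁ : x₁ ∈ Set.Ioo 0 m) (hx₂ : x₂ ∈ Set.Ioo 0 m) (hsum : x₁ + x₂ ≤ m) :
    2 * f (m / 2) - f m ≤ f x₁ + f x₂ - f (x₁ + x₂) := by
  obtain ⟨h1, h2⟩ := hx₁
  obtain ⟨h3, h4⟩ := hx₂
  have hB : f (m / 2) ≤ (1/2) * f x₁ + (1/2) * f (m - x₁) := by
    have h := hf.2 (show x₁ ∈ Set.Ioi (0:ℝ) from h1)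
      (show m - x₁ ∈ Set.Ioi (0:ℝ) by simp; linarith)
      (by norm_num : (0:ℝ) ≤ 1/2) (by norm_num : (0:ℝ) ≤ 1/2) (by norm_num)
    simp only [smul_eq_mul] at h
    have : (1/2 : ℝ) * x₁ + (1/2) * (m - x₁) = m / 2 := by ring
    rwa [this] at h
  have hA : f (x₁ + x₂) + f (m - x₁) ≤ f x₂ + f m := by
    rcases eq_or_lt_of_le hsum with heq | hlt
    · have : m - x₁ = x₂ := by linarith
      rw [heq, this]
      linarith
    · have hD : 0 < m - x₂ := by linarith
      set t := x₁ / (m - x₂) with ht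
      have ht0 : 0 ≤ t := by positivity
      have ht1 : t ≤ 1 := by
        rw [ht, div_le_one hD]; linarith
      have htD : t * (m - x₂) = x₁ := div_mul_cancel₀ _ (ne_of_gt hD)
      have hI1 := hf.2 (show x₂ ∈ Set.Ioi (0:ℝ) from h3) (show m ∈ Set.Ioi (0:ℝ) from hm)
        (by linarith : (0:ℝ) ≤ 1 - t) ht0 (by ring)
      have hI2 := hf.2 (show x₂ ∈ Set.Ioi (0:ℝ) from h3) (show m ∈ Set.Ioi (0:ℝ) from hm)
        ht0 (by linarith : (0:ℝ) ≤ 1 - t) (by ring)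
      simp only [smul_eq_mul] at hI1 hI2
      have e1 : (1 - t) * x₂ + t * m = x₁ + x₂ := by linear_combination htD
      have e2 : t * x₂ + (1 - t) * m = m - x₁ := by linear_combination -htD
      rw [e1] at hI1
      rw [e2] at hI2
      linarith
  linarith

theorem stmt_19 (n : ℕ) (hn : 2 ≤ n) (m : ℝ) (hm : 0 < m) (r : ℕ) (hr : Even r)
    (x₁ x₂ : ℝ) (hx₁ : x₁ ∈ Set.Ioo 0 m) (hx₂ : x₂ ∈ Set.Ioo 0 m) (hsum : x₁ + x₂ ≤ m) :
    2 * iteratedDeriv r (fun y => (-1) ^ (n + 1) * psi2 n y) (m / 2) -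
      iteratedDeriv r (fun y => (-1) ^ (n + 1) * psi2 n y) m ≤
    iteratedDeriv r (fun y => (-1) ^ (n + 1) * psi2 n y) x₁ +
      iteratedDeriv r (fun y => (-1) ^ (n + 1) * psi2 n y) x₂ -
      iteratedDeriv r (fun y => (-1) ^ (n + 1) * psi2 n y) (x₁ + x₂) := by
  have hp3 : 3 ≤ n + 1 := by omega
  have hg : (fun y => (-1 : ℝ) ^ (n + 1) * psi2 n y)
      = fun y => (n.factorial : ℝ) * Gs (n + 1) y := by
    funext y
    have h1 : ((-1 : ℝ)) ^ (n + 1) * ((-1 : ℝ)) ^ (n + 1) = 1 := by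
      rw [← pow_add]
      exact Even.neg_one_pow ⟨n + 1, rfl⟩
    show (-1 : ℝ) ^ (n + 1) * ((-1) ^ (n + 1) * (n.factorial : ℝ)
      * ∑' k : ℕ, (1 + (k : ℝ)) / (y + k) ^ (n + 1)) = _
    rw [← mul_assoc, ← mul_assoc, h1, one_mul]
    rfl
  rw [hg]
  set c := (n.factorial : ℝ) * ∏ i ∈ Finset.range r, -(((n + 1 : ℕ) : ℝ) + i) with hcdef
  have hc : 0 ≤ c := by
    rw [hcdef]
    have hcongr : (∏ i ∈ Finset.range r, -(((n + 1 : ℕ) : ℝ) + i))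
        = ∏ i ∈ Finset.range r, ((-1) * (((n + 1 : ℕ) : ℝ) + i)) :=
      Finset.prod_congr rfl fun i _ => by ring
    have : (∏ i ∈ Finset.range r, -(((n + 1 : ℕ) : ℝ) + i))
        = (-1) ^ r * ∏ i ∈ Finset.range r, (((n + 1 : ℕ) : ℝ) + i) := by
      rw [hcongr, Finset.prod_mul_distrib, Finset.prod_const, Finset.card_range]
    obtain ⟨s, hs⟩ := hr
    have hne : ((-1 : ℝ)) ^ r = 1 := by
      rw [hs, ← two_mul, pow_mul]
      norm_num
    rw [this, hne, one_mul]
    have : 0 ≤ ∏ i ∈ Finset.range r, (((n + 1 : ℕ) : ℝ) + i) :=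
      Finset.prod_nonneg fun i _ => by positivity
    positivity
  have hiter := iter_Gs (n + 1) hp3 (n.factorial : ℝ) r
  have hmem : ∀ z : ℝ, 0 < z → z ∈ Set.Ioi (0:ℝ) := fun z hz => hz
  obtain ⟨h1, h2⟩ := hx₁
  obtain ⟨h3, h4⟩ := hx₂
  rw [hiter (m/2) (hmem _ (by linarith)), hiter m (hmem _ hm), hiter x₁ (hmem _ h1),
    hiter x₂ (hmem _ h3), hiter (x₁ + x₂) (hmem _ (by linarith))]
  have hconv : ConvexOn ℝ (Set.Ioi 0) (fun z => c * Gs (n + 1 + r) z) := by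
    have := (convex_Gs (n + 1 + r) (by omega)).smul hc
    simpa [smul_eq_mul] using this
  exact convex_ineq hconv hm ⟨h1, h2⟩ ⟨h3, h4⟩ hsum
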